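/- Let A : ℝ^K → ℝ^K be a linear map, let (λ_i)_{i=1}^K be the non-increasing eigenvalues of the symmetric part (1/2)(A + A^⊤), and let (c_i)_{i=1}^K be a non-increasing sequence of reals. Then there exists an orthonormal basis (x_i)_{i=1}^K of ℝ^K with ⟨x_i, A x_i⟩ = c_i for all i if and only if (c_i)_{i=1}^K is majorized by (λ_i)_{i=1}^K. -/

import Mathlib

open Finset Matrix

/-- extension of a `Fin K` indexed family to `ℕ` by zero -/
noncomputable def extf (K : ℕ) (f : Fin K → ℝ) : ℕ → ℝ :=
  fun j => if h : j < K then f ⟨j, h⟩ else 0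

lemma extf_lt (K : ℕ) (f : Fin K → ℝ) {j : ℕ} (h : j < K) : extf K f j = f ⟨j, h⟩ := dif_pos h

lemma sum_filter_lt_eq (K m : ℕ) (hm : m ≤ K) (f : Fin K → ℝ) :
    ∑ i ∈ univ.filter (fun i : Fin K => (i : ℕ) < m), f i
      = ∑ j ∈ Finset.range m, extf K f j := by
  set g : ℕ → ℝ := fun j => if j < m then extf K f j else 0 with hg
  calc ∑ i ∈ univ.filter (fun i : Fin K => (i : ℕ) < m), f i
      = ∑ i : Fin K, g i := by
        rw [Finset.sum_filter]
        refine Finset.sum_congr rfl fun i _ => ?_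
        simp [hg, extf, i.isLt]
    _ = ∑ j ∈ Finset.range K, g j := (Fin.sum_univ_eq_sum_range g K)
    _ = ∑ j ∈ Finset.range m, g j := by
        refine (Finset.sum_subset (Finset.range_subset_range.2 hm) fun j _ hj => ?_).symm
        simp only [hg]
        rw [if_neg (by simpa using hj)]
    _ = ∑ j ∈ Finset.range m, extf K f j := by
        refine Finset.sum_congr rfl fun j hj => ?_
        exact if_pos (Finset.mem_range.1 hj)

lemma sum_univ_extf (K : ℕ) (f : Fin K → ℝ) :
    ∑ i, f i = ∑ j ∈ Finset.range K, extf K f j := by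
  rw [← sum_filter_lt_eq K K le_rfl f]
  congr 1
  exact (Finset.filter_true_of_mem (fun i _ => i.isLt)).symm

lemma card_filter_lt (K m : ℕ) (hm : m ≤ K) :
    ∑ i ∈ univ.filter (fun i : Fin K => (i : ℕ) < m), (1 : ℝ) = m := by
  rw [sum_filter_lt_eq K m hm]
  rw [Finset.sum_congr rfl fun j hj => extf_lt K _ (lt_of_lt_of_le (Finset.mem_range.1 hj) hm)]
  simp

lemma kyfan_bound (K m : ℕ) (hm : m < K) (lam t : Fin K → ℝ) (hlam : Antitone lam)
    (ht0 : ∀ b, 0 ≤ t b) (ht1 : ∀ b, t b ≤ 1) (hts : ∑ b, t b = m) :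
    ∑ b, lam b * t b ≤ ∑ i ∈ univ.filter (fun i : Fin K => (i : ℕ) < m), lam i := by
  set p : Fin K → Prop := fun i => (i : ℕ) < m with hp
  have hsplit : ∀ f : Fin K → ℝ,
      ∑ b, f b = ∑ b ∈ univ.filter p, f b + ∑ b ∈ univ.filter (fun i => ¬ p i), f b :=
    fun f => (Finset.sum_filter_add_sum_filter_not univ p f).symm
  set μ := lam ⟨m, hm⟩ with hμ
  have h1 : ∑ b ∈ univ.filter (fun i => ¬ p i), lam b * t b
      ≤ μ * ∑ b ∈ univ.filter (fun i => ¬ p i), t b := by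
    rw [Finset.mul_sum]
    refine Finset.sum_le_sum fun b hb => ?_
    have hbm : ¬ ((b : ℕ) < m) := (Finset.mem_filter.1 hb).2
    have : lam b ≤ μ := hlam (by simpa [Fin.le_def] using not_lt.1 hbm)
    exact mul_le_mul_of_nonneg_right this (ht0 b)
  have h2 : μ * ∑ b ∈ univ.filter p, (1 - t b) ≤ ∑ b ∈ univ.filter p, lam b * (1 - t b) := by
    rw [Finset.mul_sum]
    refine Finset.sum_le_sum fun b hb => ?_
    have hbm : (b : ℕ) < m := (Finset.mem_filter.1 hb).2
    have : μ ≤ lam b := hlam (by simp [Fin.le_def]; omega)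
    exact mul_le_mul_of_nonneg_right this (by linarith [ht1 b])
  have hcard : ∑ b ∈ univ.filter p, (1 : ℝ) = m := card_filter_lt K m hm.le
  have hsum1 : ∑ b ∈ univ.filter p, (1 - t b)
      = m - ∑ b ∈ univ.filter p, t b := by
    rw [Finset.sum_sub_distrib, hcard]
  have hsum2 : ∑ b ∈ univ.filter (fun i => ¬ p i), t b = m - ∑ b ∈ univ.filter p, t b := by
    have := hsplit t
    rw [hts] at this; linarith
  have h3 : ∑ b ∈ univ.filter p, lam b * (1 - t b)
      = ∑ b ∈ univ.filter p, lam b - ∑ b ∈ univ.filter p, lam b * t b := by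
    rw [← Finset.sum_sub_distrib]; ring_nf
  have := hsplit (fun b => lam b * t b)
  rw [this]
  rw [hsum2] at h1
  rw [hsum1] at h2
  linarith

lemma exists_ab {l1 l2 t : ℝ} (h1 : l2 ≤ t) (h2 : t ≤ l1) :
    ∃ a b : ℝ, a^2 + b^2 = 1 ∧ a^2 * l1 + b^2 * l2 = t := by
  rcases eq_or_lt_of_le (le_trans h1 h2) with h | h
  · exact ⟨1, 0, by norm_num, by nlinarith⟩
  · have hd0 : 0 < l1 - l2 := by linarith
    refine ⟨Real.sqrt ((t - l2)/(l1 - l2)), Real.sqrt ((l1 - t)/(l1 - l2)), ?_, ?_⟩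
    · rw [Real.sq_sqrt (div_nonneg (by linarith) hd0.le),
        Real.sq_sqrt (div_nonneg (by linarith) hd0.le)]
      field_simp
      ring
    · rw [Real.sq_sqrt (div_nonneg (by linarith) hd0.le),
        Real.sq_sqrt (div_nonneg (by linarith) hd0.le)]
      field_simp
      ring

lemma expand_left {N M : ℕ} (f : Fin M → ℝ) (u : Fin N → Fin M → ℝ) (α : Fin N → ℝ) :
    ∑ p, f p * (∑ q, α q * u q p) = ∑ q, α q * ∑ p, f p * u q p := by
  simp only [Finset.mul_sum]
  rw [Finset.sum_comm]
  refine Finset.sum_congr rfl fun q _ => Finset.sum_congr rfl fun p _ => by ring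

lemma expand_bilin {N M : ℕ} (g : Fin M → ℝ) (u v : Fin N → Fin M → ℝ) (α β : Fin N → ℝ) :
    ∑ p, g p * ((∑ q, α q * u q p) * (∑ r, β r * v r p))
      = ∑ q, ∑ r, α q * β r * (∑ p, g p * (u q p * v r p)) := by
  calc ∑ p, g p * ((∑ q, α q * u q p) * (∑ r, β r * v r p))
      = ∑ p, (g p * (∑ r, β r * v r p)) * (∑ q, α q * u q p) :=
        Finset.sum_congr rfl fun p _ => by ring
    _ = ∑ q, α q * ∑ p, (g p * (∑ r, β r * v r p)) * u q p :=
        expand_left (fun p => g p * (∑ r, β r * v r p)) u α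
    _ = ∑ q, α q * ∑ p, (fun p => g p * u q p) p * (∑ r, β r * v r p) := by
        refine Finset.sum_congr rfl fun q _ => ?_
        congr 1
        exact Finset.sum_congr rfl fun p _ => by ring
    _ = ∑ q, α q * ∑ r, β r * ∑ p, (g p * u q p) * v r p := by
        refine Finset.sum_congr rfl fun q _ => ?_
        congr 1
        exact expand_left (fun p => g p * u q p) v β
    _ = ∑ q, ∑ r, α q * β r * (∑ p, g p * (u q p * v r p)) := by
        refine Finset.sum_congr rfl fun q _ => ?_
        rw [Finset.mul_sum]
        refine Finset.sum_congr rfl fun r _ => ?_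
        have : ∑ p, g p * u q p * v r p = ∑ p, g p * (u q p * v r p) :=
          Finset.sum_congr rfl fun p _ => by ring
        rw [this]; ring

lemma pairsum {K : ℕ} {cs s : Fin K} (hcss : cs ≠ s) (f : Fin K → ℝ)
    (hf : ∀ p, p ≠ cs → p ≠ s → f p = 0) : ∑ p, f p = f cs + f s := by
  rw [← Finset.sum_subset (Finset.subset_univ ({cs, s} : Finset (Fin K)))
    (fun p _ hp => hf p (fun h => hp (by simp [h])) (fun h => hp (by simp [h])))]
  exact Finset.sum_pair hcss

lemma horn : ∀ (K : ℕ) (lam c : Fin K → ℝ), Antitone lam → Antitone c →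
    (∀ m, m ≤ K → ∑ j ∈ Finset.range m, extf K c j ≤ ∑ j ∈ Finset.range m, extf K lam j) →
    (∑ j ∈ Finset.range K, extf K c j = ∑ j ∈ Finset.range K, extf K lam j) →
    ∃ x : Fin K → Fin K → ℝ,
      (∀ i j, x i ⬝ᵥ x j = if i = j then (1:ℝ) else 0) ∧
      (∀ i, ∑ p, lam p * (x i p)^2 = c i) := by
  intro K
  induction K with
  | zero =>
    intro lam c _ _ _ _
    exact ⟨fun i => i.elim0, fun i => i.elim0, fun i => i.elim0⟩
  | succ n IH =>
    intro lam c hlam hc hmaj heq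
    rcases Nat.eq_zero_or_pos n with hn | hn
    · subst hn
      have h0 : c 0 = lam 0 := by
        simpa [extf, Finset.sum_range_one] using heq
      refine ⟨fun _ _ => 1, fun i j => ?_, fun i => ?_⟩
      · have : i = j := Fin.ext (by omega)
        simp [this, dotProduct]
      · have : i = 0 := Fin.ext (by omega)
        subst this
        simpa [Fin.sum_univ_one] using h0.symm
    · -- main case : n ≥ 1
      have hc0lam0 : c 0 ≤ lam 0 := by
        have h1 := hmaj 1 (by omega)
        simpa [extf, Finset.sum_range_one] using h1
      have hlast : lam (Fin.last n) ≤ c 0 := by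
        have hA : ∑ j ∈ Finset.range (n+1), extf (n+1) c j
            ≤ ∑ j ∈ Finset.range (n+1), c 0 := by
          refine Finset.sum_le_sum fun j hj => ?_
          rw [extf_lt _ _ (Finset.mem_range.1 hj)]
          exact hc (Fin.zero_le _)
        have hB : ∑ j ∈ Finset.range (n+1), lam (Fin.last n)
            ≤ ∑ j ∈ Finset.range (n+1), extf (n+1) lam j := by
          refine Finset.sum_le_sum fun j hj => ?_
          rw [extf_lt _ _ (Finset.mem_range.1 hj)]
          exact hlam (Fin.le_last _)
        rw [Finset.sum_const, Finset.card_range] at hA hB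
        have hmul : ((n:ℝ)+1) * lam (Fin.last n) ≤ ((n:ℝ)+1) * c 0 := by
          have := heq
          push_cast [nsmul_eq_mul] at hA hB
          linarith
        exact le_of_mul_le_mul_left hmul (by positivity)
      -- find pivot k
      obtain ⟨k, hks, hkc⟩ : ∃ k : Fin n, lam k.succ ≤ c 0 ∧ c 0 ≤ lam k.castSucc := by
        classical
        set T := univ.filter (fun i : Fin (n+1) => lam i ≤ c 0) with hT
        have hTne : T.Nonempty := ⟨Fin.last n, by simp [hT, hlast]⟩
        set i0 := T.min' hTne with hi0def
        have hi0 : lam i0 ≤ c 0 := (Finset.mem_filter.1 (T.min'_mem hTne)).2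
        cases hv0 : (i0 : ℕ) with
        | zero =>
          refine ⟨⟨0, hn⟩, ?_, ?_⟩
          · have hi00 : i0 = 0 := Fin.ext (by simp [hv0])
            calc lam (⟨0, hn⟩ : Fin n).succ ≤ lam 0 := hlam (by simp [Fin.le_def])
              _ ≤ c 0 := hi00 ▸ hi0
          · exact hc0lam0
        | succ v =>
          have hv1 : v + 1 < n + 1 := hv0 ▸ i0.isLt
          refine ⟨⟨v, by omega⟩, ?_, ?_⟩
          · have hsucc : (⟨v, by omega⟩ : Fin n).succ = i0 := Fin.ext (by simp [hv0])
            rw [hsucc]; exact hi0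
          · have hlt : (⟨v, by omega⟩ : Fin (n+1)) < i0 := by simp [Fin.lt_def, hv0]
            have hnotmem : (⟨v, by omega⟩ : Fin (n+1)) ∉ T :=
              fun hmem => absurd (T.min'_le _ hmem) (not_le.2 hlt)
            have hngt : ¬ lam ⟨v, by omega⟩ ≤ c 0 :=
              fun h => hnotmem (Finset.mem_filter.2 ⟨Finset.mem_univ _, h⟩)
            exact (not_le.1 hngt).le
      -- notation
      set cs := k.castSucc with hcsdef
      set sk := k.succ with hskdef
      have hcss : cs ≠ sk := ne_of_lt (Fin.castSucc_lt_succ : k.castSucc < k.succ)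
      obtain ⟨a, b, hab, habc⟩ := exists_ab hks hkc
      set μ := lam cs + lam sk - c 0 with hμdef
      have hμ1 : μ ≤ lam cs := by rw [hμdef]; linarith
      have hμ2 : lam sk ≤ μ := by rw [hμdef]; linarith
      have habμ : b^2 * lam cs + a^2 * lam sk = μ := by
        rw [hμdef]; linear_combination (lam cs + lam sk) * hab - habc
      set y : Fin (n+1) → ℝ := fun p => if p = cs then a else if p = sk then b else 0 with hydef
      set y' : Fin (n+1) → ℝ := fun p => if p = cs then b else if p = sk then -a else 0 with hy'def
      set w : Fin n → Fin (n+1) → ℝ :=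
        fun q p => if q = k then y' p else if p = cs.succAbove q then 1 else 0 with hwdef
      set lam' : Fin n → ℝ := fun q => if q = k then μ else lam (cs.succAbove q) with hlam'def
      set c' : Fin n → ℝ := fun q => c q.succ with hc'def
      -- succAbove facts
      have hsak : cs.succAbove k = sk := Fin.succAbove_castSucc_self k
      have hsA_ne_cs : ∀ q : Fin n, cs.succAbove q ≠ cs := fun q => Fin.succAbove_ne cs q
      have hsA_ne_s : ∀ q : Fin n, q ≠ k → cs.succAbove q ≠ sk := by
        intro q hq h
        exact hq (Fin.succAbove_right_injective (p := cs) (h.trans hsak.symm))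
      -- basic values
      have hycs : y cs = a := by simp [hydef]
      have hys : y sk = b := by simp [hydef, hcss.symm]
      have hy'cs : y' cs = b := by simp [hy'def]
      have hy's : y' sk = -a := by simp [hy'def, hcss.symm]
      have hy0 : ∀ p, p ≠ cs → p ≠ sk → y p = 0 := fun p h1 h2 => by simp [hydef, h1, h2]
      have hy'0 : ∀ p, p ≠ cs → p ≠ sk → y' p = 0 := fun p h1 h2 => by simp [hy'def, h1, h2]
      -- dot product facts
      have hyy : ∑ p, y p * y p = 1 := by
        rw [pairsum hcss _ (fun p h1 h2 => by rw [hy0 p h1 h2]; ring), hycs, hys]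
        linear_combination hab
      have hyy' : ∑ p, y p * y' p = 0 := by
        rw [pairsum hcss _ (fun p h1 h2 => by rw [hy0 p h1 h2]; ring), hycs, hys, hy'cs, hy's]
        ring
      have hy'y' : ∑ p, y' p * y' p = 1 := by
        rw [pairsum hcss _ (fun p h1 h2 => by rw [hy'0 p h1 h2]; ring), hy'cs, hy's]
        linear_combination hab
      have hyw : ∀ q, ∑ p, y p * w q p = 0 := by
        intro q
        by_cases hq : q = k
        · subst hq
          have : ∀ p, y p * w q p = y p * y' p := fun p => by simp [hwdef]
          rw [Finset.sum_congr rfl fun p _ => this p]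
          exact hyy'
        · have : ∀ p, y p * w q p = if p = cs.succAbove q then y p else 0 := by
            intro p
            by_cases h1 : p = cs.succAbove q <;> simp [hwdef, hq, h1]
          rw [Finset.sum_congr rfl fun p _ => this p, Finset.sum_ite_eq' univ _ y,
            if_pos (Finset.mem_univ _)]
          exact hy0 _ (hsA_ne_cs q) (hsA_ne_s q hq)
      have hy'w : ∀ q, q ≠ k → ∑ p, y' p * w q p = 0 := by
        intro q hq
        have : ∀ p, y' p * w q p = if p = cs.succAbove q then y' p else 0 := by
          intro p
          by_cases h1 : p = cs.succAbove q <;> simp [hwdef, hq, h1]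
        rw [Finset.sum_congr rfl fun p _ => this p, Finset.sum_ite_eq' univ _ y',
          if_pos (Finset.mem_univ _)]
        exact hy'0 _ (hsA_ne_cs q) (hsA_ne_s q hq)
      have hww : ∀ q r, ∑ p, w q p * w r p = if q = r then 1 else 0 := by
        intro q r
        by_cases hq : q = k <;> by_cases hr : r = k
        · rw [if_pos (hq.trans hr.symm)]
          have : ∀ p, w q p * w r p = y' p * y' p := fun p => by simp [hwdef, hq, hr]
          rw [Finset.sum_congr rfl fun p _ => this p]
          exact hy'y'
        · rw [if_neg (fun h => hr (h.symm.trans hq))]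
          have : ∀ p, w q p * w r p = if p = cs.succAbove r then y' p else 0 := by
            intro p
            by_cases h1 : p = cs.succAbove r <;> simp [hwdef, hq, hr, h1]
          rw [Finset.sum_congr rfl fun p _ => this p, Finset.sum_ite_eq' univ _ y',
            if_pos (Finset.mem_univ _)]
          exact hy'0 _ (hsA_ne_cs r) (hsA_ne_s r hr)
        · rw [if_neg (fun h => hq (h.trans hr))]
          have : ∀ p, w q p * w r p = if p = cs.succAbove q then y' p else 0 := by
            intro p
            by_cases h1 : p = cs.succAbove q <;> simp [hwdef, hq, hr, h1]
          rw [Finset.sum_congr rfl fun p _ => this p, Finset.sum_ite_eq' univ _ y',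
            if_pos (Finset.mem_univ _)]
          exact hy'0 _ (hsA_ne_cs q) (hsA_ne_s q hq)
        · have : ∀ p, w q p * w r p
              = if p = cs.succAbove q then (if p = cs.succAbove r then 1 else 0) else 0 := by
            intro p
            by_cases h1 : p = cs.succAbove q <;> by_cases h2 : p = cs.succAbove r <;>
              simp [hwdef, hq, hr, h1, h2]
          rw [Finset.sum_congr rfl fun p _ => this p, Finset.sum_ite_eq' univ _ _,
            if_pos (Finset.mem_univ _)]
          by_cases hqr : q = r
          · subst hqr; simp
          · rw [if_neg hqr, if_neg fun h =>
              hqr (Fin.succAbove_right_injective (p := cs) h)]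
      have hlw : ∀ q r, ∑ p, lam p * (w q p * w r p) = if q = r then lam' q else 0 := by
        intro q r
        by_cases hq : q = k <;> by_cases hr : r = k
        · rw [if_pos (hq.trans hr.symm)]
          have : ∀ p, lam p * (w q p * w r p) = lam p * (y' p * y' p) :=
            fun p => by simp [hwdef, hq, hr]
          rw [Finset.sum_congr rfl fun p _ => this p,
            pairsum hcss _ (fun p h1 h2 => by rw [hy'0 p h1 h2]; ring), hy'cs, hy's]
          have : lam' q = μ := by simp [hlam'def, hq]
          rw [this]
          linear_combination habμ
        · rw [if_neg (fun h => hr (h.symm.trans hq))]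
          have : ∀ p, lam p * (w q p * w r p)
              = if p = cs.succAbove r then lam p * y' p else 0 := by
            intro p
            by_cases h1 : p = cs.succAbove r <;> simp [hwdef, hq, hr, h1]
          rw [Finset.sum_congr rfl fun p _ => this p, Finset.sum_ite_eq' univ _ _,
            if_pos (Finset.mem_univ _), hy'0 _ (hsA_ne_cs r) (hsA_ne_s r hr)]
          ring
        · rw [if_neg (fun h => hq (h.trans hr))]
          have : ∀ p, lam p * (w q p * w r p)
              = if p = cs.succAbove q then lam p * y' p else 0 := by
            intro p
            by_cases h1 : p = cs.succAbove q <;> simp [hwdef, hq, hr, h1] <;> ring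
          rw [Finset.sum_congr rfl fun p _ => this p, Finset.sum_ite_eq' univ _ _,
            if_pos (Finset.mem_univ _), hy'0 _ (hsA_ne_cs q) (hsA_ne_s q hq)]
          ring
        · have : ∀ p, lam p * (w q p * w r p)
              = if p = cs.succAbove q then (if p = cs.succAbove r then lam p else 0) else 0 := by
            intro p
            by_cases h1 : p = cs.succAbove q <;> by_cases h2 : p = cs.succAbove r <;>
              simp [hwdef, hq, hr, h1, h2]
          rw [Finset.sum_congr rfl fun p _ => this p, Finset.sum_ite_eq' univ _ _,
            if_pos (Finset.mem_univ _)]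
          by_cases hqr : q = r
          · rw [if_pos hqr, if_pos (congrArg _ hqr)]
            have : lam' q = lam (cs.succAbove q) := by simp [hlam'def, hq]
            rw [this, hqr]
          · rw [if_neg hqr, if_neg fun h =>
              hqr (Fin.succAbove_right_injective (p := cs) h)]
      -- antitonicity of lam'
      have hsA_mono : Monotone (cs.succAbove) := (Fin.strictMono_succAbove cs).monotone
      have hlam'anti : Antitone lam' := by
        intro q r hqr
        by_cases hq : q = k <;> by_cases hr : r = k
        · have : q = r := hq.trans hr.symm
          rw [this]
        · -- q = k, r ≠ k : lam' r = lam (sA r) ≤ lam (sA k) = lam sk ≤ μ = lam' q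
          have h1 : lam' r = lam (cs.succAbove r) := by simp [hlam'def, hr]
          have h2 : lam' q = μ := by simp [hlam'def, hq]
          rw [h1, h2]
          calc lam (cs.succAbove r) ≤ lam (cs.succAbove k) := hlam (hsA_mono (hq ▸ hqr))
            _ = lam sk := by rw [hsak]
            _ ≤ μ := hμ2
        · -- q ≠ k, r = k : lam' r = μ ≤ lam cs ≤ lam (sA q)
          have h1 : lam' r = μ := by simp [hlam'def, hr]
          have h2 : lam' q = lam (cs.succAbove q) := by simp [hlam'def, hq]
          rw [h1, h2]
          have hqk : q < k := lt_of_le_of_ne (hr ▸ hqr) hq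
          have hsq : cs.succAbove q = q.castSucc :=
            Fin.succAbove_of_castSucc_lt _ _ (hcsdef ▸ Fin.castSucc_lt_castSucc_iff.mpr hqk)
          have : lam cs ≤ lam (cs.succAbove q) := by
            rw [hsq, hcsdef]
            exact hlam (Fin.castSucc_le_castSucc_iff.mpr hqk.le)
          linarith
        · have h1 : lam' r = lam (cs.succAbove r) := by simp [hlam'def, hr]
          have h2 : lam' q = lam (cs.succAbove q) := by simp [hlam'def, hq]
          rw [h1, h2]
          exact hlam (hsA_mono hqr)
      have hc'anti : Antitone c' := by
        intro q r hqr
        simp only [hc'def]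
        exact hc (Fin.succ_le_succ_iff.mpr hqr)
      -- partial sums of c'
      have hC0 : extf (n+1) c 0 = c 0 := by
        rw [extf_lt _ _ (Nat.succ_pos n)]
        congr 1
      have hextc' : ∀ m, m ≤ n → ∑ j ∈ Finset.range m, extf n c' j
          = ∑ j ∈ Finset.range (m+1), extf (n+1) c j - c 0 := by
        intro m hm
        rw [Finset.sum_range_succ' (extf (n+1) c) m, hC0]
        have : ∀ j ∈ Finset.range m, extf n c' j = extf (n+1) c (j+1) := by
          intro j hj
          have hjn : j < n := lt_of_lt_of_le (Finset.mem_range.1 hj) hm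
          rw [extf_lt _ _ hjn, extf_lt _ _ (by omega : j + 1 < n + 1)]
          simp only [hc'def]
          congr 1
        rw [Finset.sum_congr rfl this]
        ring
      -- partial sums of lam'
      have hextlam' : ∀ m, m ≤ n → ∑ j ∈ Finset.range m, extf n lam' j =
          if m ≤ (k:ℕ) then ∑ j ∈ Finset.range m, extf (n+1) lam j
          else ∑ j ∈ Finset.range (m+1), extf (n+1) lam j - c 0 := by
        intro m
        induction m with
        | zero => intro _; simp
        | succ m ihm =>
          intro hm1
          have hmn : m < n := hm1
          rw [Finset.sum_range_succ, ihm hmn.le, extf_lt _ _ hmn]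
          rcases lt_trichotomy m (k:ℕ) with hmk | hmk | hmk
          · rw [if_pos hmk.le, if_pos (by omega), Finset.sum_range_succ,
              extf_lt _ _ (by omega : m < n + 1)]
            have hne : (⟨m, hmn⟩ : Fin n) ≠ k := fun h => by
              have := congrArg Fin.val h; simp at this; omega
            have hsq : cs.succAbove ⟨m, hmn⟩ = (⟨m, hmn⟩ : Fin n).castSucc :=
              Fin.succAbove_of_castSucc_lt _ _ (by simp [hcsdef, Fin.lt_def]; omega)
            have : lam' ⟨m, hmn⟩ = lam ⟨m, by omega⟩ := by
              rw [hlam'def]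
              simp only [if_neg hne]
              rw [hsq]
              congr 1
            rw [this]
          · rw [if_pos (le_of_eq hmk), if_neg (by omega)]
            have hkk : (⟨m, hmn⟩ : Fin n) = k := Fin.ext hmk
            have hl' : lam' ⟨m, hmn⟩ = μ := by simp [hlam'def, hkk]
            have hΛm : extf (n+1) lam m = lam cs := by
              rw [extf_lt _ _ (by omega : m < n + 1), hcsdef]
              congr 1
              exact Fin.ext (by simp [hmk])
            have hΛm1 : extf (n+1) lam (m+1) = lam sk := by
              rw [extf_lt _ _ (by omega : m + 1 < n + 1), hskdef]
              congr 1
              exact Fin.ext (by simp [hmk])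
            rw [hl', Finset.sum_range_succ (extf (n+1) lam) (m+1),
              Finset.sum_range_succ (extf (n+1) lam) m, hΛm, hΛm1, hμdef]
            ring
          · rw [if_neg (by omega), if_neg (by omega)]
            have hne : (⟨m, hmn⟩ : Fin n) ≠ k := fun h => by
              have := congrArg Fin.val h; simp at this; omega
            have hsq : cs.succAbove ⟨m, hmn⟩ = (⟨m, hmn⟩ : Fin n).succ :=
              Fin.succAbove_of_le_castSucc _ _ (by simp [hcsdef, Fin.le_def]; omega)
            have : lam' ⟨m, hmn⟩ = extf (n+1) lam (m+1) := by
              rw [hlam'def, extf_lt _ _ (by omega : m + 1 < n + 1)]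
              simp only [if_neg hne]
              rw [hsq]
              congr 1
            rw [this, Finset.sum_range_succ (extf (n+1) lam) (m+1)]
            ring
      -- majorization for (lam', c')
      have hmaj' : ∀ m, m ≤ n → ∑ j ∈ Finset.range m, extf n c' j
          ≤ ∑ j ∈ Finset.range m, extf n lam' j := by
        intro m hm
        rw [hextc' m hm, hextlam' m hm]
        by_cases hmk : m ≤ (k:ℕ)
        · rw [if_pos hmk]
          have h1 : ∑ j ∈ Finset.range (m+1), extf (n+1) c j - c 0
              = ∑ j ∈ Finset.range m, extf (n+1) c (j+1) := by
            rw [Finset.sum_range_succ' (extf (n+1) c) m, hC0]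
            ring
          rw [h1]
          have h2 : ∑ j ∈ Finset.range m, extf (n+1) c (j+1)
              ≤ ∑ j ∈ Finset.range m, extf (n+1) c j := by
            refine Finset.sum_le_sum fun j hj => ?_
            have hjm : j < m := Finset.mem_range.1 hj
            have hjn : j + 1 < n + 1 := by omega
            rw [extf_lt _ _ hjn, extf_lt _ _ (by omega : j < n + 1)]
            exact hc (by simp [Fin.le_def])
          exact le_trans h2 (hmaj m (by omega))
        · rw [if_neg hmk]
          have := hmaj (m+1) (by omega)
          linarith
      have heq' : ∑ j ∈ Finset.range n, extf n c' j = ∑ j ∈ Finset.range n, extf n lam' j := by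
        rw [hextc' n le_rfl, hextlam' n le_rfl, if_neg (by omega : ¬ n ≤ (k:ℕ))]
        linarith [heq]
      obtain ⟨z, hz1, hz2⟩ := IH lam' c' hlam'anti hc'anti hmaj' heq'
      refine ⟨fun i => Fin.cases y (fun i' p => ∑ q, z i' q * w q p) i, ?_, ?_⟩
      · intro i j
        induction i using Fin.cases with
        | zero =>
          induction j using Fin.cases with
          | zero =>
            rw [if_pos rfl]
            simp only [Fin.cases_zero, dotProduct]
            exact hyy
          | succ j =>
            rw [if_neg (Fin.succ_ne_zero j).symm]
            simp only [Fin.cases_zero, Fin.cases_succ, dotProduct]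
            rw [expand_left y w (z j)]
            simp only [hyw, mul_zero]
            exact Finset.sum_const_zero
        | succ i =>
          induction j using Fin.cases with
          | zero =>
            rw [if_neg (Fin.succ_ne_zero i)]
            simp only [Fin.cases_zero, Fin.cases_succ, dotProduct]
            have e0 : ∀ p, (∑ q, z i q * w q p) * y p = y p * (∑ q, z i q * w q p) :=
              fun p => by ring
            rw [Finset.sum_congr rfl fun p _ => e0 p, expand_left y w (z i)]
            simp only [hyw, mul_zero]
            exact Finset.sum_const_zero
          | succ j =>
            simp only [Fin.cases_succ, dotProduct]
            have e0 : ∀ p, (∑ q, z i q * w q p) * (∑ r, z j r * w r p)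
                = (fun _ => (1:ℝ)) p * ((∑ q, z i q * w q p) * (∑ r, z j r * w r p)) :=
              fun p => by simp
            rw [Finset.sum_congr rfl fun p _ => e0 p, expand_bilin (fun _ => (1:ℝ)) w w (z i) (z j)]
            have e1 : ∀ q r, (∑ p, (1:ℝ) * (w q p * w r p)) = if q = r then 1 else 0 := by
              intro q r
              rw [Finset.sum_congr rfl fun p _ => one_mul (w q p * w r p)]
              exact hww q r
            have e2 : ∀ q, ∑ r, z i q * z j r * (∑ p, (1:ℝ) * (w q p * w r p))
                = z i q * z j q := by
              intro q
              rw [Finset.sum_congr rfl fun r _ => by rw [e1 q r]]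
              rw [Fintype.sum_eq_single q (fun r hr => by rw [if_neg (fun h => hr h.symm)]; ring)]
              rw [if_pos rfl]; ring
            rw [Finset.sum_congr rfl fun q _ => e2 q]
            have := hz1 i j
            simp only [dotProduct] at this
            rw [this]
            by_cases hij : i = j
            · rw [if_pos hij, if_pos (congrArg Fin.succ hij)]
            · rw [if_neg hij, if_neg (fun h => hij (Fin.succ_inj.mp h))]
      · intro i
        induction i using Fin.cases with
        | zero =>
          simp only [Fin.cases_zero]
          rw [pairsum hcss _ (fun p h1 h2 => by rw [hy0 p h1 h2]; ring), hycs, hys]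
          linear_combination habc
        | succ i =>
          simp only [Fin.cases_succ]
          have e0 : ∀ p, lam p * (∑ q, z i q * w q p)^2
              = lam p * ((∑ q, z i q * w q p) * (∑ r, z i r * w r p)) := fun p => by ring
          rw [Finset.sum_congr rfl fun p _ => e0 p, expand_bilin lam w w (z i) (z i)]
          have e2 : ∀ q, ∑ r, z i q * z i r * (∑ p, lam p * (w q p * w r p))
              = lam' q * z i q ^ 2 := by
            intro q
            rw [Finset.sum_congr rfl fun r _ => by rw [hlw q r]]
            rw [Fintype.sum_eq_single q (fun r hr => by rw [if_neg (fun h => hr h.symm)]; ring)]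
            rw [if_pos rfl]; ring
          rw [Finset.sum_congr rfl fun q _ => e2 q, hz2 i]

lemma dot_mulVec_left {K : ℕ} (W : Matrix (Fin K) (Fin K) ℝ) (u t : Fin K → ℝ) :
    (W *ᵥ u) ⬝ᵥ t = u ⬝ᵥ (Wᵀ *ᵥ t) := by
  rw [Matrix.dotProduct_mulVec, Matrix.vecMul_transpose]

lemma conj_dot {K : ℕ} (W M : Matrix (Fin K) (Fin K) ℝ) (u v : Fin K → ℝ) :
    (W *ᵥ u) ⬝ᵥ (M *ᵥ (W *ᵥ v)) = u ⬝ᵥ ((Wᵀ * M * W) *ᵥ v) := by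
  rw [dot_mulVec_left, Matrix.mulVec_mulVec, Matrix.mulVec_mulVec]


/-- Schur–Horn form used in the paper: an orthonormal basis `(x_i)` of `ℝ^K` with
`⟨x_i, A x_i⟩ = c i` exists iff `c` is majorized by the non-increasing eigenvalues
of the symmetric part of `A`. -/
theorem stmt9 (K : ℕ) (A : Matrix (Fin K) (Fin K) ℝ)
    (S : Matrix (Fin K) (Fin K) ℝ) (hS : S = (1/2 : ℝ) • (A + Aᵀ))
    (hSH : S.IsHermitian)
    (lam : Fin K → ℝ) (σ : Equiv.Perm (Fin K))
    (hlam : lam = hSH.eigenvalues ∘ σ) (hlammono : Antitone lam)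
    (c : Fin K → ℝ) (hcmono : Antitone c) :
    (∃ x : Fin K → (Fin K → ℝ),
      (∀ i j, x i ⬝ᵥ x j = if i = j then (1:ℝ) else 0) ∧
      (∀ i, x i ⬝ᵥ A.mulVec (x i) = c i)) ↔
    ((∀ j : ℕ, j < K →
        ∑ i ∈ univ.filter (fun i : Fin K => (i : ℕ) < j), c i ≤
          ∑ i ∈ univ.filter (fun i : Fin K => (i : ℕ) < j), lam i) ∧
      ∑ i, c i = ∑ i, lam i) := by
  -- quadratic forms of A and S agree
  have hquad : ∀ v : Fin K → ℝ, v ⬝ᵥ S *ᵥ v = v ⬝ᵥ A *ᵥ v := by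
    intro v
    have hT : v ⬝ᵥ Aᵀ *ᵥ v = v ⬝ᵥ A *ᵥ v := by
      rw [Matrix.mulVec_transpose, dotProduct_comm, ← Matrix.dotProduct_mulVec]
    rw [hS, Matrix.smul_mulVec, dotProduct_smul, Matrix.add_mulVec,
      dotProduct_add, hT, smul_eq_mul]
    ring
  -- spectral setup
  set Vm : Matrix (Fin K) (Fin K) ℝ := (hSH.eigenvectorUnitary : Matrix (Fin K) (Fin K) ℝ)
    with hVm
  have hstar : star Vm = Vmᵀ := by
    ext i j
    simp [Matrix.star_apply]
  have hspec : S = Vm * Matrix.diagonal hSH.eigenvalues * Vmᵀ := by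
    have h := hSH.spectral_theorem
    rw [RCLike.ofReal_real_eq_id] at h
    simp only [Function.comp_id, Function.id_comp] at h
    rw [← hstar]
    exact h
  have hVtV : Vmᵀ * Vm = 1 := by
    rw [← hstar]
    exact Matrix.mem_unitaryGroup_iff'.mp hSH.eigenvectorUnitary.2
  set W : Matrix (Fin K) (Fin K) ℝ := Vm.submatrix id σ with hWdef
  have hdiagperm : Matrix.diagonal lam = (Matrix.diagonal hSH.eigenvalues).submatrix σ σ := by
    ext i j
    by_cases h : i = j
    · simp [h, hlam]
    · simp [Matrix.diagonal_apply, Matrix.submatrix_apply, h, σ.injective.ne h]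
  have hW1 : Wᵀ * W = 1 := by
    rw [hWdef, Matrix.transpose_submatrix]
    have := Matrix.submatrix_mul_equiv Vmᵀ Vm σ (Equiv.refl (Fin K)) σ
    simp only [Equiv.coe_refl] at this
    rw [this, hVtV, Matrix.submatrix_one_equiv]
  have hW2 : W * Wᵀ = 1 := mul_eq_one_comm.mp hW1
  have hSW : S = W * Matrix.diagonal lam * Wᵀ := by
    rw [hdiagperm, hWdef, Matrix.transpose_submatrix]
    have h1 := Matrix.submatrix_mul_equiv Vm (Matrix.diagonal hSH.eigenvalues) id σ σ
    have h2 := Matrix.submatrix_mul_equiv (Vm * Matrix.diagonal hSH.eigenvalues) Vmᵀ id σ id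
    rw [h1, h2, Matrix.submatrix_id_id]; exact hspec
  have hWSW : Wᵀ * S * W = Matrix.diagonal lam := by
    rw [hSW]
    calc Wᵀ * (W * Matrix.diagonal lam * Wᵀ) * W
        = (Wᵀ * W) * Matrix.diagonal lam * (Wᵀ * W) := by simp only [Matrix.mul_assoc]
      _ = Matrix.diagonal lam := by rw [hW1, Matrix.one_mul, Matrix.mul_one]
  have hdq : ∀ u : Fin K → ℝ, u ⬝ᵥ (Matrix.diagonal lam *ᵥ u) = ∑ p, lam p * u p ^ 2 := by
    intro u
    simp only [dotProduct, Matrix.mulVec_diagonal]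
    exact Finset.sum_congr rfl fun p _ => by ring
  constructor
  · rintro ⟨x, hx1, hx2⟩
    set X : Matrix (Fin K) (Fin K) ℝ := Matrix.of fun i p => x i p with hXdef
    have hXXt : X * Xᵀ = 1 := by
      ext i j
      have h := hx1 i j
      simp only [dotProduct] at h
      simp [Matrix.mul_apply, Matrix.one_apply, hXdef, h]
    set Z : Matrix (Fin K) (Fin K) ℝ := X * W with hZdef
    have hZZt : Z * Zᵀ = 1 := by
      rw [hZdef, Matrix.transpose_mul, Matrix.mul_assoc, ← Matrix.mul_assoc W Wᵀ Xᵀ, hW2,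
        Matrix.one_mul, hXXt]
    have hZtZ : Zᵀ * Z = 1 := mul_eq_one_comm.mp hZZt
    have hrow : ∀ i, ∑ b, (Z i b)^2 = 1 := by
      intro i
      have h := Matrix.ext_iff.2 hZZt i i
      simp only [Matrix.mul_apply, Matrix.transpose_apply, Matrix.one_apply_eq] at h
      rw [← h]
      exact Finset.sum_congr rfl fun b _ => by ring
    have hcol : ∀ b, ∑ i, (Z i b)^2 = 1 := by
      intro b
      have h := Matrix.ext_iff.2 hZtZ b b
      simp only [Matrix.mul_apply, Matrix.transpose_apply, Matrix.one_apply_eq] at h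
      rw [← h]
      exact Finset.sum_congr rfl fun i _ => by ring
    have hval : ∀ i, ∑ b, lam b * (Z i b)^2 = c i := by
      intro i
      have h1 : x i ⬝ᵥ S *ᵥ x i = c i := (hquad (x i)).trans (hx2 i)
      rw [← h1, hSW, ← Matrix.mulVec_mulVec, ← Matrix.mulVec_mulVec,
        Matrix.dotProduct_mulVec, ← Matrix.mulVec_transpose]
      have hu : Wᵀ *ᵥ x i = fun b => Z i b := by
        ext b
        simp only [Matrix.mulVec, dotProduct, Matrix.transpose_apply, hZdef,
          Matrix.mul_apply, hXdef, Matrix.of_apply]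
        exact Finset.sum_congr rfl fun p _ => by ring
      rw [hu, hdq]
    constructor
    · intro m hm
      have e1 : ∑ i ∈ univ.filter (fun i : Fin K => (i : ℕ) < m), c i
          = ∑ b, lam b * (∑ i ∈ univ.filter (fun i : Fin K => (i : ℕ) < m), (Z i b)^2) := by
        rw [Finset.sum_congr rfl fun i _ => (hval i).symm, Finset.sum_comm]
        exact Finset.sum_congr rfl fun b _ => by rw [Finset.mul_sum]
      rw [e1]
      refine kyfan_bound K m hm lam _ hlammono (fun b => Finset.sum_nonneg fun i _ => sq_nonneg _)
        (fun b => ?_) ?_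
      · rw [← hcol b]
        exact Finset.sum_le_sum_of_subset_of_nonneg (Finset.filter_subset _ _)
          (fun i _ _ => sq_nonneg _)
      · rw [Finset.sum_comm]
        rw [Finset.sum_congr rfl fun i _ => hrow i]
        exact card_filter_lt K m hm.le
    · rw [Finset.sum_congr rfl fun i _ => (hval i).symm, Finset.sum_comm]
      refine Finset.sum_congr rfl fun b _ => ?_
      rw [← Finset.mul_sum, hcol b, mul_one]
  · rintro ⟨hmajF, heqF⟩
    have hmajR : ∀ m, m ≤ K → ∑ j ∈ Finset.range m, extf K c j
        ≤ ∑ j ∈ Finset.range m, extf K lam j := by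
      intro m hm
      rcases lt_or_eq_of_le hm with h | h
      · rw [← sum_filter_lt_eq K m hm c, ← sum_filter_lt_eq K m hm lam]
        exact hmajF m h
      · subst h
        rw [← sum_univ_extf, ← sum_univ_extf]
        exact le_of_eq heqF
    have heqR : ∑ j ∈ Finset.range K, extf K c j = ∑ j ∈ Finset.range K, extf K lam j := by
      rw [← sum_univ_extf, ← sum_univ_extf]
      exact heqF
    obtain ⟨z, hz1, hz2⟩ := horn K lam c hlammono hcmono hmajR heqR
    refine ⟨fun i => W *ᵥ z i, fun i j => ?_, fun i => ?_⟩
    · rw [dot_mulVec_left, Matrix.mulVec_mulVec, hW1, Matrix.one_mulVec]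
      exact hz1 i j
    · rw [← hquad, conj_dot, hWSW, hdq]
      exact hz2 i
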